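/- Let r_1, …, r_n (n ≥ 3) be indeterminates over ℚ, let f = ∏_{i=1}^n (x − r_i), and let F = Res_y(f_1, f_3), a polynomial in x with coefficients in ℚ[r_1, …, r_n]. Then for all indices k, j with 2 ≤ k ≤ n, 2 ≤ j ≤ n, and k ≠ j, the linear polynomial r_1 − 2r_k + r_j divides the evaluation F(r_1) in the ring ℚ[r_1, …, r_n]. -/

import Mathlib

/-- The resultant of two univariate polynomials `p, q` over a commutative ring,
defined as the determinant of the Sylvester matrix of `p` and `q` built from their
(actual) degrees: it has `q.natDegree` shifted rows of coefficients of `p` followed by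
`p.natDegree` shifted rows of coefficients of `q`. -/
noncomputable def sylResultant {R : Type} [CommRing R] (p q : Polynomial R) : R :=
  Matrix.det (Matrix.of fun i j : Fin (p.natDegree + q.natDegree) =>
    if (i : ℕ) < q.natDegree then
      (if (i : ℕ) ≤ (j : ℕ) ∧ (j : ℕ) ≤ (i : ℕ) + p.natDegree
        then p.coeff ((i : ℕ) + p.natDegree - (j : ℕ)) else 0)
    else
      (if (i : ℕ) - q.natDegree ≤ (j : ℕ) ∧ (j : ℕ) ≤ ((i : ℕ) - q.natDegree) + q.natDegree
        then q.coeff (((i : ℕ) - q.natDegree) + q.natDegree - (j : ℕ)) else 0))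

lemma sylResultant_eval₂_eq_zero {R S : Type} [CommRing R] [CommRing S] [IsDomain S]
    (φ : R →+* S) (p q : Polynomial R) (hN : 0 < p.natDegree + q.natDegree) (α : S)
    (hp : Polynomial.eval₂ φ α p = 0) (hq : Polynomial.eval₂ φ α q = 0) :
    φ (sylResultant p q) = 0 := by
  classical
  set d := p.natDegree with hd
  set e := q.natDegree with he
  set M : Matrix (Fin (d + e)) (Fin (d + e)) S := Matrix.of (fun i j : Fin (d + e) =>
    if (i : ℕ) < e then
      (if (i : ℕ) ≤ (j : ℕ) ∧ (j : ℕ) ≤ (i : ℕ) + d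
        then φ (p.coeff ((i : ℕ) + d - (j : ℕ))) else 0)
    else
      (if (i : ℕ) - e ≤ (j : ℕ) ∧ (j : ℕ) ≤ ((i : ℕ) - e) + e
        then φ (q.coeff (((i : ℕ) - e) + e - (j : ℕ))) else 0)) with hM
  have hφ : φ (sylResultant p q) = M.det := by
    rw [sylResultant, RingHom.map_det]
    congr 1
    ext i jj
    simp only [RingHom.mapMatrix_apply, Matrix.map_apply, Matrix.of_apply, hM,
      apply_ite φ, map_zero]
    rfl
  set v : Fin (d + e) → S := fun jj => α ^ (d + e - 1 - (jj : ℕ)) with hv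
  have hvne : v ≠ 0 := by
    intro h0
    have h1 : v ⟨d + e - 1, by omega⟩ = 0 := by rw [h0]; rfl
    rw [hv] at h1
    simp only [Nat.sub_self, pow_zero] at h1
    exact one_ne_zero h1
  have hPev : ∑ m ∈ Finset.range (d + 1), φ (p.coeff m) * α ^ m = 0 := by
    have h2 : (p.map φ).eval α = ∑ i ∈ Finset.range (d + 1), (p.map φ).coeff i * α ^ i :=
      Polynomial.eval_eq_sum_range' (Nat.lt_succ_of_le Polynomial.natDegree_map_le) α
    rw [Polynomial.eval_map, hp] at h2
    simp only [Polynomial.coeff_map] at h2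
    exact h2.symm
  have hQev : ∑ m ∈ Finset.range (e + 1), φ (q.coeff m) * α ^ m = 0 := by
    have h2 : (q.map φ).eval α = ∑ i ∈ Finset.range (e + 1), (q.map φ).coeff i * α ^ i :=
      Polynomial.eval_eq_sum_range' (Nat.lt_succ_of_le Polynomial.natDegree_map_le) α
    rw [Polynomial.eval_map, hq] at h2
    simp only [Polynomial.coeff_map] at h2
    exact h2.symm
  have hmv : M.mulVec v = 0 := by
    funext i
    have hiN : (i : ℕ) < d + e := i.isLt
    simp only [Matrix.mulVec, dotProduct, Pi.zero_apply, hM, hv, Matrix.of_apply]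
    rcases lt_or_ge (i : ℕ) e with hi | hi
    · simp only [hi, if_true]
      rw [Fin.sum_univ_eq_sum_range (fun jj =>
        (if (i : ℕ) ≤ jj ∧ jj ≤ (i : ℕ) + d then φ (p.coeff ((i : ℕ) + d - jj)) else 0) *
          α ^ (d + e - 1 - jj))]
      have hsub : Finset.Icc (i : ℕ) ((i : ℕ) + d) ⊆ Finset.range (d + e) := by
        intro x hx
        rw [Finset.mem_Icc] at hx
        rw [Finset.mem_range]
        omega
      rw [← Finset.sum_subset hsub (by
        intro x hx hnx
        rw [Finset.mem_Icc] at hnx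
        rw [if_neg hnx, zero_mul])]
      rw [← Finset.Ico_add_one_right_eq_Icc, Finset.sum_Ico_eq_sum_range]
      rw [show (i : ℕ) + d + 1 - (i : ℕ) = d + 1 by omega]
      have hrefl := Finset.sum_range_reflect
        (fun m => φ (p.coeff m) * α ^ ((e - 1 - (i : ℕ)) + m)) (d + 1)
      simp only [Nat.add_sub_cancel] at hrefl
      trans (∑ m ∈ Finset.range (d + 1), φ (p.coeff (d - m)) * α ^ ((e - 1 - (i : ℕ)) + (d - m)))
      · refine Finset.sum_congr rfl fun m hm => ?_
        rw [Finset.mem_range] at hm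
        rw [if_pos ⟨by omega, by omega⟩]
        have e1 : (i : ℕ) + d - ((i : ℕ) + m) = d - m := by omega
        have e2 : d + e - 1 - ((i : ℕ) + m) = (e - 1 - (i : ℕ)) + (d - m) := by omega
        rw [e1, e2]
      · rw [hrefl]
        trans (∑ m ∈ Finset.range (d + 1), α ^ (e - 1 - (i : ℕ)) * (φ (p.coeff m) * α ^ m))
        · refine Finset.sum_congr rfl fun m _ => ?_
          rw [pow_add]
          ring
        · rw [← Finset.mul_sum, hPev, mul_zero]
    · have hi' : ¬ ((i : ℕ) < e) := Nat.not_lt.mpr hi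
      simp only [hi', if_false]
      rw [Fin.sum_univ_eq_sum_range (fun jj =>
        (if (i : ℕ) - e ≤ jj ∧ jj ≤ ((i : ℕ) - e) + e
          then φ (q.coeff (((i : ℕ) - e) + e - jj)) else 0) * α ^ (d + e - 1 - jj))]
      have hsub : Finset.Icc ((i : ℕ) - e) (((i : ℕ) - e) + e) ⊆ Finset.range (d + e) := by
        intro x hx
        rw [Finset.mem_Icc] at hx
        rw [Finset.mem_range]
        omega
      rw [← Finset.sum_subset hsub (by
        intro x hx hnx
        rw [Finset.mem_Icc] at hnx
        rw [if_neg hnx, zero_mul])]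
      rw [← Finset.Ico_add_one_right_eq_Icc, Finset.sum_Ico_eq_sum_range]
      rw [show ((i : ℕ) - e) + e + 1 - ((i : ℕ) - e) = e + 1 by omega]
      have hrefl := Finset.sum_range_reflect
        (fun m => φ (q.coeff m) * α ^ ((d + e - 1 - (i : ℕ)) + m)) (e + 1)
      simp only [Nat.add_sub_cancel] at hrefl
      trans (∑ m ∈ Finset.range (e + 1),
        φ (q.coeff (e - m)) * α ^ ((d + e - 1 - (i : ℕ)) + (e - m)))
      · refine Finset.sum_congr rfl fun m hm => ?_
        rw [Finset.mem_range] at hm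
        rw [if_pos ⟨by omega, by omega⟩]
        have e1 : ((i : ℕ) - e) + e - (((i : ℕ) - e) + m) = e - m := by omega
        have e2 : d + e - 1 - (((i : ℕ) - e) + m) = (d + e - 1 - (i : ℕ)) + (e - m) := by omega
        rw [e1, e2]
      · rw [hrefl]
        trans (∑ m ∈ Finset.range (e + 1), α ^ (d + e - 1 - (i : ℕ)) * (φ (q.coeff m) * α ^ m))
        · refine Finset.sum_congr rfl fun m _ => ?_
          rw [pow_add]
          ring
        · rw [← Finset.mul_sum, hQev, mul_zero]
  have hdet : M.det = 0 := by
    by_contra hne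
    exact hvne (Matrix.eq_zero_of_mulVec_eq_zero hne hmv)
  rw [hφ, hdet]

lemma dvd_sub_aeval_subst {n : ℕ} (i₀ : Fin n) (a : MvPolynomial (Fin n) ℚ)
    (g : MvPolynomial (Fin n) ℚ) :
    (MvPolynomial.X i₀ - a) ∣
      g - MvPolynomial.aeval (fun i => if i = i₀ then a else MvPolynomial.X i) g := by
  induction g using MvPolynomial.induction_on with
  | C c => simp [MvPolynomial.algebraMap_eq]
  | add p q hp hq =>
    obtain ⟨c1, h1⟩ := hp
    obtain ⟨c2, h2⟩ := hq
    exact ⟨c1 + c2, by rw [map_add]; linear_combination h1 + h2⟩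
  | mul_X p i hp =>
    obtain ⟨c, hc⟩ := hp
    by_cases hi : i = i₀
    · subst hi
      refine ⟨c * MvPolynomial.X i +
        MvPolynomial.aeval (fun i' => if i' = i then a else MvPolynomial.X i') p, ?_⟩
      rw [map_mul, MvPolynomial.aeval_X, if_pos rfl]
      linear_combination (MvPolynomial.X i) * hc
    · refine ⟨c * MvPolynomial.X i, ?_⟩
      rw [map_mul, MvPolynomial.aeval_X, if_neg hi]
      linear_combination (MvPolynomial.X i) * hc

/-- Let `r 0, …, r (n-1)` (`n ≥ 3`) be indeterminates over `ℚ`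
(the variables of `MvPolynomial (Fin n) ℚ`) and `f = ∏ᵢ (x - rᵢ)`. Bivariate
polynomials in `x, y` are elements of `Polynomial (Polynomial (MvPolynomial (Fin n) ℚ))`,
the outer variable being `y`; `f₁` and `f₃` are determined by `(y - x)·f₁ = f(y) - f(x)`
and `((y - x)²/2)·f₃ = f(y) - 2f((x+y)/2) + f(x)`, and `F = Res_y(f₁, f₃)`. Then for all
indices `k ≠ 0`, `j ≠ 0` with `k ≠ j` (i.e. roots other than the first one `r 0`), the
linear polynomial `r 0 - 2 rₖ + rⱼ` divides `F(r 0)` in `ℚ[r 0, …, r (n-1)]`. -/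
theorem linear_form_dvd_resultant_f1_f3_eval
    (n : ℕ) (hn : 3 ≤ n)
    (f : Polynomial (MvPolynomial (Fin n) ℚ))
    (hf : f = ∏ i : Fin n, (Polynomial.X - Polynomial.C (MvPolynomial.X i)))
    (f1 f3 : Polynomial (Polynomial (MvPolynomial (Fin n) ℚ)))
    (hf1 : (Polynomial.X - Polynomial.C Polynomial.X) * f1 =
      f.map Polynomial.C - Polynomial.C f)
    (hf3 : (Polynomial.X - Polynomial.C Polynomial.X) ^ 2 *
        Polynomial.C (Polynomial.C (MvPolynomial.C (2⁻¹ : ℚ))) * f3 =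
      f.map Polynomial.C
        - 2 * Polynomial.eval₂ (Polynomial.C.comp Polynomial.C)
            ((Polynomial.C Polynomial.X + Polynomial.X) *
              Polynomial.C (Polynomial.C (MvPolynomial.C (2⁻¹ : ℚ)))) f
        + Polynomial.C f)
    (k j : Fin n) (hk : k ≠ ⟨0, by omega⟩) (hj : j ≠ ⟨0, by omega⟩) (hkj : k ≠ j) :
    (MvPolynomial.X (⟨0, by omega⟩ : Fin n) - 2 * MvPolynomial.X k + MvPolynomial.X j) ∣
      Polynomial.eval (MvPolynomial.X ⟨0, by omega⟩) (sylResultant f1 f3) := by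
  classical
  set i0 : Fin n := ⟨0, by omega⟩ with hi0
  have hk' : k ≠ i0 := hk
  have hj' : j ≠ i0 := hj
  set a : MvPolynomial (Fin n) ℚ := 2 * MvPolynomial.X k - MvPolynomial.X j with ha
  set s : Fin n → MvPolynomial (Fin n) ℚ :=
    fun i => if i = i0 then a else MvPolynomial.X i with hs
  set σ : MvPolynomial (Fin n) ℚ →+* MvPolynomial (Fin n) ℚ :=
    (MvPolynomial.aeval s).toRingHom with hσ
  set ψ : Polynomial (MvPolynomial (Fin n) ℚ) →+* MvPolynomial (Fin n) ℚ :=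
    Polynomial.eval₂RingHom σ a with hψ
  -- basic values of σ
  have hσC : ∀ c : ℚ, σ (MvPolynomial.C c) = MvPolynomial.C c := by
    intro c
    simp [hσ, MvPolynomial.algebraMap_eq]
  have hσ0 : σ (MvPolynomial.X i0) = a := by simp [hσ, hs]
  have hσk : σ (MvPolynomial.X k) = MvPolynomial.X k := by simp [hσ, hs, hk']
  have hσj : σ (MvPolynomial.X j) = MvPolynomial.X j := by simp [hσ, hs, hj']
  have hψX : ψ Polynomial.X = a := by simp [hψ]
  have hψC2 : ψ (Polynomial.C (MvPolynomial.C (2⁻¹ : ℚ))) = MvPolynomial.C (2⁻¹ : ℚ) := by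
    rw [hψ]
    simp only [Polynomial.coe_eval₂RingHom, Polynomial.eval₂_C]
    exact hσC _
  -- eval₂ of f through any ring hom
  have hfactor : ∀ (h : MvPolynomial (Fin n) ℚ →+* MvPolynomial (Fin n) ℚ)
      (x : MvPolynomial (Fin n) ℚ),
      Polynomial.eval₂ h x f = ∏ i : Fin n, (x - h (MvPolynomial.X i)) := by
    intro h x
    rw [hf, ← Polynomial.coe_eval₂RingHom, map_prod]
    refine Finset.prod_congr rfl fun i _ => ?_
    simp [Polynomial.coe_eval₂RingHom]
  -- ψ f = 0
  have hψf : ψ f = 0 := by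
    have h0 : ψ f = Polynomial.eval₂ σ a f := by simp [hψ]
    rw [h0, hfactor]
    exact Finset.prod_eq_zero (Finset.mem_univ i0) (by rw [hσ0, sub_self])
  -- eval₂ ψ (X j) (f.map C) = 0
  have hΦfC : Polynomial.eval₂ ψ (MvPolynomial.X j) (f.map Polynomial.C) = 0 := by
    rw [Polynomial.eval₂_map, hfactor]
    refine Finset.prod_eq_zero (Finset.mem_univ j) ?_
    have h0 : (ψ.comp Polynomial.C) (MvPolynomial.X j) = σ (MvPolynomial.X j) := by
      simp [hψ, RingHom.comp_apply]
    rw [h0, hσj, sub_self]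
  -- the middle substitution point is X k
  have hΦm : Polynomial.eval₂ ψ (MvPolynomial.X j)
      ((Polynomial.C Polynomial.X + Polynomial.X) *
        Polynomial.C (Polynomial.C (MvPolynomial.C (2⁻¹ : ℚ)))) = MvPolynomial.X k := by
    rw [Polynomial.eval₂_mul, Polynomial.eval₂_add, Polynomial.eval₂_C, Polynomial.eval₂_X,
      Polynomial.eval₂_C, hψX, hψC2, ha]
    have h3 : (MvPolynomial.C (2⁻¹ : ℚ) : MvPolynomial (Fin n) ℚ) * 2 = 1 := by
      rw [show ((2 : MvPolynomial (Fin n) ℚ)) = MvPolynomial.C (2 : ℚ) from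
        (map_ofNat MvPolynomial.C 2).symm, ← map_mul]
      norm_num
    linear_combination (MvPolynomial.X k) * h3
  -- eval₂ ψ (X j) of the middle term of hf3
  have hΦmid : Polynomial.eval₂ ψ (MvPolynomial.X j)
      (Polynomial.eval₂ (Polynomial.C.comp Polynomial.C)
        ((Polynomial.C Polynomial.X + Polynomial.X) *
          Polynomial.C (Polynomial.C (MvPolynomial.C (2⁻¹ : ℚ)))) f) = 0 := by
    rw [← Polynomial.coe_eval₂RingHom, Polynomial.hom_eval₂, Polynomial.coe_eval₂RingHom, hΦm,
      hfactor]
    refine Finset.prod_eq_zero (Finset.mem_univ k) ?_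
    have h0 : ((Polynomial.eval₂RingHom ψ (MvPolynomial.X j)).comp
        (Polynomial.C.comp Polynomial.C)) (MvPolynomial.X k) = σ (MvPolynomial.X k) := by
      simp [hψ, RingHom.comp_apply]
    rw [h0, hσk, sub_self]
  -- nonvanishing of the cofactors
  have hXja : (MvPolynomial.X j - a : MvPolynomial (Fin n) ℚ) ≠ 0 := by
    intro h0
    rw [ha] at h0
    have h1 := congrArg (MvPolynomial.eval (fun i => if i = j then (1 : ℚ) else 0)) h0
    simp [hkj] at h1
  have hChalf : (MvPolynomial.C (2⁻¹ : ℚ) : MvPolynomial (Fin n) ℚ) ≠ 0 := by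
    intro h0
    have h1 := congrArg (MvPolynomial.eval (fun _ : Fin n => (0 : ℚ))) h0
    simp at h1
  -- Φ f1 = 0
  have hΦf1 : Polynomial.eval₂ ψ (MvPolynomial.X j) f1 = 0 := by
    have h1 := congrArg (Polynomial.eval₂RingHom ψ (MvPolynomial.X j)) hf1
    simp only [map_mul, map_sub] at h1
    simp only [Polynomial.coe_eval₂RingHom, Polynomial.eval₂_sub, Polynomial.eval₂_X,
      Polynomial.eval₂_C] at h1
    rw [hψX, hΦfC, hψf, sub_zero] at h1
    exact (mul_eq_zero.mp h1).resolve_left hXja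
  -- Φ f3 = 0
  have hΦf3 : Polynomial.eval₂ ψ (MvPolynomial.X j) f3 = 0 := by
    have h1 := congrArg (Polynomial.eval₂RingHom ψ (MvPolynomial.X j)) hf3
    simp only [map_mul, map_sub, map_add, map_pow, map_ofNat] at h1
    simp only [Polynomial.coe_eval₂RingHom, Polynomial.eval₂_sub, Polynomial.eval₂_mul,
      Polynomial.eval₂_X, Polynomial.eval₂_C] at h1
    rw [hψX, hψC2, hΦfC, hψf, hΦmid, mul_zero] at h1
    have h2 : ((MvPolynomial.X j - a) ^ 2 * MvPolynomial.C (2⁻¹ : ℚ) : MvPolynomial (Fin n) ℚ) *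
        Polynomial.eval₂ ψ (MvPolynomial.X j) f3 = 0 := by
      rw [h1]; ring
    exact (mul_eq_zero.mp h2).resolve_left
      (mul_ne_zero (pow_ne_zero 2 hXja) hChalf)
  -- degree bound
  have hfm : f.Monic := by
    rw [hf]
    exact Polynomial.monic_prod_of_monic _ _ fun i _ => Polynomial.monic_X_sub_C _
  have hfdeg : f.natDegree = n := by
    rw [hf, Polynomial.natDegree_prod _ _ fun i _ => Polynomial.X_sub_C_ne_zero _]
    simp [Polynomial.natDegree_X_sub_C]
  have hmapdeg : (f.map (Polynomial.C :
      MvPolynomial (Fin n) ℚ →+* Polynomial (MvPolynomial (Fin n) ℚ))).natDegree = n := by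
    rw [hfm.natDegree_map, hfdeg]
  have hrhsdeg : (f.map Polynomial.C - Polynomial.C f).natDegree = n := by
    rw [Polynomial.natDegree_sub_eq_left_of_natDegree_lt, hmapdeg]
    rw [hmapdeg, Polynomial.natDegree_C]
    omega
  have hdegf1 : 2 ≤ f1.natDegree := by
    have h1 : ((Polynomial.X - Polynomial.C Polynomial.X) * f1).natDegree = n := by
      rw [hf1, hrhsdeg]
    have h2 := Polynomial.natDegree_mul_le
      (p := Polynomial.X - Polynomial.C (Polynomial.X :
        Polynomial (MvPolynomial (Fin n) ℚ))) (q := f1)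
    rw [h1, Polynomial.natDegree_X_sub_C] at h2
    omega
  have hN : 0 < f1.natDegree + f3.natDegree := by omega
  -- resultant vanishes under ψ
  have hres : ψ (sylResultant f1 f3) = 0 :=
    sylResultant_eval₂_eq_zero ψ f1 f3 hN _ hΦf1 hΦf3
  -- transfer to σ of the evaluation
  have hσres : σ (Polynomial.eval (MvPolynomial.X i0) (sylResultant f1 f3)) = 0 := by
    have h4 := (Polynomial.eval₂_at_apply (p := sylResultant f1 f3) σ (MvPolynomial.X i0)).symm
    rw [hσ0] at h4
    rw [h4]
    have h5 : Polynomial.eval₂ σ a (sylResultant f1 f3) = ψ (sylResultant f1 f3) := by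
      simp [hψ]
    rw [h5, hres]
  -- conclude with the factor theorem
  have h5 : (MvPolynomial.X i0 - a) ∣
      Polynomial.eval (MvPolynomial.X i0) (sylResultant f1 f3) -
        σ (Polynomial.eval (MvPolynomial.X i0) (sylResultant f1 f3)) :=
    dvd_sub_aeval_subst i0 a _
  rw [hσres, sub_zero] at h5
  have hlin : MvPolynomial.X i0 - 2 * MvPolynomial.X k + MvPolynomial.X j =
      MvPolynomial.X i0 - a := by
    rw [ha]; ring
  rw [hlin]
  exact h5
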